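/- The collection Con_A(B_n) of lattice congruences on the weak order on B_n that arise as restrictions of lattice congruences on the weak order on S_{2n} is closed under meet and join in the congruence lattice Con(B_n); that is, Con_A(B_n) induces a sublattice of Con(B_n). -/

import Mathlib

/-- The inversion set of a permutation of the `2n` points. -/
def invSet {n : ℕ} (π : Equiv.Perm (Fin (2 * n))) : Set (Fin (2 * n) × Fin (2 * n)) :=
  {p | p.1 < p.2 ∧ π.symm p.2 < π.symm p.1}

/-- The right weak order on `S_{2n}`: containment of inversion sets. -/
def wle {n : ℕ} (u w : Equiv.Perm (Fin (2 * n))) : Prop := invSet u ⊆ invSet w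

/-- `m` is the least upper bound of `x` and `y` with respect to `le`. -/
def IsLUBr {α : Type*} (le : α → α → Prop) (x y m : α) : Prop :=
  le x m ∧ le y m ∧ ∀ b, le x b → le y b → le m b

/-- `m` is the greatest lower bound of `x` and `y` with respect to `le`. -/
def IsGLBr {α : Type*} (le : α → α → Prop) (x y m : α) : Prop :=
  le m x ∧ le m y ∧ ∀ b, le b x → le b y → le b m

/-- A lattice congruence of the lattice given by the order `le`: an equivalence
relation compatible with joins and meets. -/
def IsCongr {α : Type*} (le : α → α → Prop) (r : Setoid α) : Prop :=
  (∀ x1 x2 y1 y2 m1 m2, r.r x1 x2 → r.r y1 y2 →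
      IsLUBr le x1 y1 m1 → IsLUBr le x2 y2 m2 → r.r m1 m2) ∧
  (∀ x1 x2 y1 y2 m1 m2, r.r x1 x2 → r.r y1 y2 →
      IsGLBr le x1 y1 m1 → IsGLBr le x2 y2 m2 → r.r m1 m2)

/-- The hyperoctahedral group `B_n`, realized as the centrally symmetric
permutations of the `2n` points: those fixed by conjugation by `w₀`. -/
def BGrp (n : ℕ) : Type :=
  {π : Equiv.Perm (Fin (2 * n)) // Fin.revPerm * π * Fin.revPerm = π}

/-- The weak order on `B_n`, induced from the weak order on `S_{2n}`. -/
def ble {n : ℕ} (x y : BGrp n) : Prop := wle x.val y.val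

/-- The congruence `r'` on `S_{2n}` restricts to the congruence `r` on `B_n`. -/
def Restricts {n : ℕ} (r' : Setoid (Equiv.Perm (Fin (2 * n)))) (r : Setoid (BGrp n)) : Prop :=
  ∀ x y : BGrp n, r.r x y ↔ r'.r x.val y.val

/-- `Con_A(B_n)`: the congruences of the weak order on `B_n` that are
restrictions of congruences of the weak order on `S_{2n}`. -/
def ConA {n : ℕ} (r : Setoid (BGrp n)) : Prop :=
  ∃ r' : Setoid (Equiv.Perm (Fin (2 * n))), IsCongr wle r' ∧ Restricts r' r

/-- Refinement order on equivalence relations. -/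
def setle {α : Type*} (r s : Setoid α) : Prop := ∀ x y, r.r x y → s.r x y

namespace SB
open Relation

variable {n : ℕ}

abbrev F2 (n : ℕ) := Fin (2 * n)
abbrev PP (n : ℕ) := Set (F2 n × F2 n)

def SubP (E : PP n) : Prop := ∀ p ∈ E, p.1 < p.2
def Closed (E : PP n) : Prop := ∀ a b c : F2 n, (a, b) ∈ E → (b, c) ∈ E → (a, c) ∈ E
def CoClosed (E : PP n) : Prop :=
  ∀ a b c : F2 n, a < b → b < c → (a, c) ∈ E → (a, b) ∈ E ∨ (b, c) ∈ E

theorem subP_invSet (π : Equiv.Perm (F2 n)) : SubP (invSet π) := fun _ hp => hp.1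

theorem closed_invSet (π : Equiv.Perm (F2 n)) : Closed (invSet π) := by
  rintro a b c ⟨h1, h2⟩ ⟨h3, h4⟩
  exact ⟨h1.trans h3, h4.trans h2⟩

theorem coClosed_invSet (π : Equiv.Perm (F2 n)) : CoClosed (invSet π) := by
  rintro a b c hab hbc ⟨_, h2⟩
  rcases lt_or_ge (π.symm b) (π.symm a) with h | h
  · exact Or.inl ⟨hab, h⟩
  · exact Or.inr ⟨hbc, lt_of_lt_of_le h2 h⟩

/-- Realization: every biclosed set of pairs is the inversion set of a permutation. -/
theorem realize (E : PP n) (hP : SubP E) (hC : Closed E) (hCC : CoClosed E) :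
    ∃ π : Equiv.Perm (F2 n), invSet π = E := by
  classical
  set r : F2 n → F2 n → Prop :=
    fun a b => (a < b ∧ (a, b) ∉ E) ∨ (b < a ∧ (b, a) ∈ E) with hrdef
  have htri : ∀ a b : F2 n, r a b ∨ a = b ∨ r b a := by
    intro a b
    rcases lt_trichotomy a b with h | h | h
    · by_cases hE : (a, b) ∈ E
      · exact Or.inr (Or.inr (Or.inr ⟨h, hE⟩))
      · exact Or.inl (Or.inl ⟨h, hE⟩)
    · exact Or.inr (Or.inl h)
    · by_cases hE : (b, a) ∈ E
      · exact Or.inl (Or.inr ⟨h, hE⟩)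
      · exact Or.inr (Or.inr (Or.inl ⟨h, hE⟩))
  have hirr : ∀ a : F2 n, ¬ r a a := by
    rintro a (⟨h, _⟩ | ⟨h, _⟩) <;> exact lt_irrefl a h
  have htrans : ∀ a b c : F2 n, r a b → r b c → r a c := by
    rintro a b c (⟨hab, hnab⟩ | ⟨hba, hbaE⟩) (⟨hbc, hnbc⟩ | ⟨hcb, hcbE⟩)
    · exact Or.inl ⟨hab.trans hbc, fun h => (hCC a b c hab hbc h).elim hnab hnbc⟩
    · rcases lt_trichotomy a c with h | h | h
      · exact Or.inl ⟨h, fun hac => hnab (hC a c b hac hcbE)⟩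
      · subst h; exact absurd hcbE hnab
      · exact Or.inr ⟨h, (hCC c a b h hab hcbE).resolve_right hnab⟩
    · rcases lt_trichotomy a c with h | h | h
      · exact Or.inl ⟨h, fun hac => hnbc (hC b a c hbaE hac)⟩
      · subst h; exact absurd hbaE hnbc
      · exact Or.inr ⟨h, (hCC b c a hbc h hbaE).resolve_left hnbc⟩
    · exact Or.inr ⟨hcb.trans hba, hC c b a hcbE hbaE⟩
  haveI sto : IsStrictTotalOrder (F2 n) r :=
    { trichotomous := fun a b h1 h2 => ((htri a b).resolve_left h1).resolve_right h2
      irrefl := hirr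
      trans := htrans }
  letI dr : DecidableRel r := Classical.decRel r
  let L : LinearOrder (F2 n) := @linearOrderOfSTO _ r sto dr
  let e := @Fintype.orderIsoFinOfCardEq (F2 n) L _ (2 * n) (by simp)
  refine ⟨e.toEquiv, ?_⟩
  have key : ∀ a b : F2 n, e.toEquiv.symm a < e.toEquiv.symm b ↔ r a b := by
    intro a b
    have := @OrderIso.lt_iff_lt (Fin (2 * n)) (F2 n) _ L.toPreorder e
      (e.toEquiv.symm a) (e.toEquiv.symm b)
    constructor
    · intro h
      have h2 := (this).2 h
      have h3 : @LT.lt _ L.toLT a b := by simpa using h2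
      exact h3
    · intro h
      refine (this).1 ?_
      have h3 : @LT.lt _ L.toLT a b := h
      simpa using h3
  ext p
  obtain ⟨a, b⟩ := p
  simp only [invSet, Set.mem_setOf_eq, Equiv.symm]
  constructor
  · rintro ⟨hab, hlt⟩
    have : r b a := (key b a).1 hlt
    rcases this with ⟨h, _⟩ | ⟨h, hE⟩
    · exact absurd hab (asymm h)
    · exact hE
  · intro hE
    have hab := hP _ hE
    refine ⟨hab, (key b a).2 (Or.inr ⟨hab, hE⟩)⟩

/-! ### Joins and meets of biclosed sets -/

def stepR (E F : PP n) (a b : F2 n) : Prop := (a, b) ∈ E ∨ (a, b) ∈ F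

def jset (E F : PP n) : PP n := {p | TransGen (stepR E F) p.1 p.2}

theorem tg_lt {E F : PP n} (hE : SubP E) (hF : SubP F) {a b : F2 n}
    (h : TransGen (stepR E F) a b) : a < b := by
  induction h with
  | single h => exact h.elim (fun h => hE _ h) (fun h => hF _ h)
  | tail _ h ih => exact ih.trans (h.elim (fun h => hE _ h) (fun h => hF _ h))

theorem subP_jset {E F : PP n} (hE : SubP E) (hF : SubP F) : SubP (jset E F) :=
  fun _ hp => tg_lt hE hF hp

theorem closed_jset (E F : PP n) : Closed (jset E F) := fun _ _ _ h1 h2 => h1.trans h2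

theorem tg_mem {E F G : PP n} (hG : Closed G) (hEG : E ⊆ G) (hFG : F ⊆ G) {a b : F2 n}
    (h : TransGen (stepR E F) a b) : (a, b) ∈ G := by
  induction h with
  | single h => exact h.elim (fun h => hEG h) (fun h => hFG h)
  | tail _ h ih => exact hG _ _ _ ih (h.elim (fun h => hEG h) (fun h => hFG h))

theorem jset_min {E F G : PP n} (hG : Closed G) (hEG : E ⊆ G) (hFG : F ⊆ G) :
    jset E F ⊆ G :=
  fun _ hp => tg_mem hG hEG hFG hp

theorem mem_jset_left {E F : PP n} {p : F2 n × F2 n} (h : p ∈ E) : p ∈ jset E F :=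
  TransGen.single (Or.inl h)

theorem mem_jset_right {E F : PP n} {p : F2 n × F2 n} (h : p ∈ F) : p ∈ jset E F :=
  TransGen.single (Or.inr h)

theorem coClosed_jset {E F : PP n} (hPE : SubP E) (hPF : SubP F)
    (hE : CoClosed E) (hF : CoClosed F) : CoClosed (jset E F) := by
  have hstep : ∀ a b c : F2 n, a < b → b < c → stepR E F a c →
      stepR E F a b ∨ stepR E F b c := by
    intro a b c hab hbc h
    rcases h with h | h
    · exact (hE a b c hab hbc h).imp Or.inl Or.inl
    · exact (hF a b c hab hbc h).imp Or.inr Or.inr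
  have key : ∀ i k : F2 n, TransGen (stepR E F) i k →
      ∀ j : F2 n, i < j → j < k → TransGen (stepR E F) i j ∨ TransGen (stepR E F) j k := by
    intro i k h
    induction h with
    | single h =>
      intro j hij hjk
      exact (hstep _ _ _ hij hjk h).imp TransGen.single TransGen.single
    | @tail b k h hb ih =>
      intro j hij hjk
      rcases lt_trichotomy j b with hjb | hjb | hjb
      · rcases ih j hij hjb with h' | h'
        · exact Or.inl h'
        · exact Or.inr (h'.tail hb)
      · subst hjb; exact Or.inl h
      · rcases hstep _ _ _ hjb hjk hb with h' | h'
        · exact Or.inl (h.tail h')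
        · exact Or.inr (TransGen.single h')
  intro a b c hab hbc h
  exact key a c h b hab hbc

def coP (E : PP n) : PP n := {p | p.1 < p.2 ∧ p ∉ E}

theorem subP_coP (E : PP n) : SubP (coP E) := fun _ hp => hp.1

theorem coP_coP {E : PP n} (hP : SubP E) : coP (coP E) = E := by
  ext p
  constructor
  · rintro ⟨h1, h2⟩
    by_contra hc
    exact h2 ⟨h1, hc⟩
  · intro h
    exact ⟨hP _ h, fun hc => hc.2 h⟩

theorem coP_anti {E F : PP n} (h : E ⊆ F) : coP F ⊆ coP E :=
  fun _ hp => ⟨hp.1, fun hc => hp.2 (h hc)⟩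

theorem closed_coP {E : PP n} (hCC : CoClosed E) : Closed (coP E) := by
  rintro a b c ⟨hab, h1⟩ ⟨hbc, h2⟩
  exact ⟨hab.trans hbc, fun h => (hCC a b c hab hbc h).elim h1 h2⟩

theorem coClosed_coP {E : PP n} (hP : SubP E) (hC : Closed E) : CoClosed (coP E) := by
  intro a b c hab hbc h
  by_cases h1 : (a, b) ∈ E
  · by_cases h2 : (b, c) ∈ E
    · exact absurd (hC a b c h1 h2) h.2
    · exact Or.inr ⟨hbc, h2⟩
  · exact Or.inl ⟨hab, h1⟩

/-! ### The weak order is a lattice -/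

theorem wle_refl (u : Equiv.Perm (F2 n)) : wle u u := subset_rfl

theorem wle_antisymm {u w : Equiv.Perm (F2 n)} (h1 : wle u w) (h2 : wle w u) : u = w := by
  have hiff : ∀ a b : F2 n, a < b → (u.symm b < u.symm a ↔ w.symm b < w.symm a) := by
    intro a b hab
    constructor
    · intro h; exact (h1 ⟨hab, h⟩ : (a, b) ∈ invSet w).2
    · intro h; exact (h2 ⟨hab, h⟩ : (a, b) ∈ invSet u).2
  have hiff' : ∀ a b : F2 n, u.symm a < u.symm b ↔ w.symm a < w.symm b := by
    intro a b
    rcases lt_trichotomy a b with h | h | h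
    · constructor
      · intro hu
        by_contra hc
        rcases lt_or_eq_of_le (le_of_not_gt hc) with h' | h'
        · exact absurd ((hiff a b h).2 h') (asymm hu)
        · exact absurd (w.symm.injective h') (by rintro rfl; exact lt_irrefl _ h)
      · intro hw
        by_contra hc
        rcases lt_or_eq_of_le (le_of_not_gt hc) with h' | h'
        · exact absurd ((hiff a b h).1 h') (asymm hw)
        · exact absurd (u.symm.injective h') (by rintro rfl; exact lt_irrefl _ h)
    · subst h; simp
    · constructor
      · intro hu; exact (hiff b a h).1 hu
      · intro hw; exact (hiff b a h).2 hw
  -- the composite w.symm ∘ u is a strictly monotone bijection of Fin (2n)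
  have hsm : StrictMono (fun x : F2 n => w.symm (u x)) := by
    intro x y hxy
    have : u.symm (u x) < u.symm (u y) := by simpa using hxy
    exact (hiff' (u x) (u y)).1 this
  have hsurj : Function.Surjective (fun x : F2 n => w.symm (u x)) :=
    (u.trans w.symm).surjective
  let eiso := StrictMono.orderIsoOfSurjective _ hsm hsurj
  have : eiso = OrderIso.refl (F2 n) := Subsingleton.elim _ _
  have hid : ∀ x : F2 n, w.symm (u x) = x := by
    intro x
    have := congrArg (fun f : F2 n ≃o F2 n => f x) this
    simpa [eiso] using this
  apply Equiv.ext
  intro x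
  have h := hid x
  have h2 : w.symm (w x) = x := w.symm_apply_apply x
  exact w.symm.injective (h.trans h2.symm)

theorem exists_lub (u v : Equiv.Perm (F2 n)) : ∃ j, IsLUBr wle u v j := by
  obtain ⟨j, hj⟩ := realize (jset (invSet u) (invSet v))
    (subP_jset (subP_invSet u) (subP_invSet v)) (closed_jset _ _)
    (coClosed_jset (subP_invSet u) (subP_invSet v) (coClosed_invSet u) (coClosed_invSet v))
  refine ⟨j, ?_, ?_, ?_⟩
  · intro p hp; rw [hj]; exact mem_jset_left hp
  · intro p hp; rw [hj]; exact mem_jset_right hp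
  · intro b hub hvb
    intro p hp
    rw [hj] at hp
    exact jset_min (closed_invSet b) hub hvb hp

theorem exists_glb (u v : Equiv.Perm (F2 n)) : ∃ g, IsGLBr wle u v g := by
  have hPu := subP_coP (invSet u)
  have hPv := subP_coP (invSet v)
  have hCu := closed_coP (coClosed_invSet u)
  have hCv := closed_coP (coClosed_invSet v)
  have hCCu := coClosed_coP (subP_invSet u) (closed_invSet u)
  have hCCv := coClosed_coP (subP_invSet v) (closed_invSet v)
  set G := jset (coP (invSet u)) (coP (invSet v)) with hG
  obtain ⟨g, hg⟩ := realize (coP G)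
    (subP_coP G)
    (closed_coP (coClosed_jset hPu hPv hCCu hCCv))
    (coClosed_coP (subP_jset hPu hPv) (closed_jset _ _))
  refine ⟨g, ?_, ?_, ?_⟩
  · intro p hp
    rw [hg] at hp
    by_contra hc
    exact hp.2 (mem_jset_left ⟨hp.1, hc⟩)
  · intro p hp
    rw [hg] at hp
    by_contra hc
    exact hp.2 (mem_jset_right ⟨hp.1, hc⟩)
  · intro b hbu hbv
    intro p hp
    rw [hg]
    refine ⟨(subP_invSet b) _ hp, fun hc => ?_⟩
    have : G ⊆ coP (invSet b) :=
      jset_min (closed_coP (coClosed_invSet b)) (coP_anti hbu) (coP_anti hbv)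
    exact (this hc).2 hp

theorem lub_unique {u v a b : Equiv.Perm (F2 n)}
    (ha : IsLUBr wle u v a) (hb : IsLUBr wle u v b) : a = b :=
  wle_antisymm (ha.2.2 b hb.1 hb.2.1) (hb.2.2 a ha.1 ha.2.1)

theorem glb_unique {u v a b : Equiv.Perm (F2 n)}
    (ha : IsGLBr wle u v a) (hb : IsGLBr wle u v b) : a = b :=
  wle_antisymm (hb.2.2 a ha.1 ha.2.1) (ha.2.2 b hb.1 hb.2.1)

/-! ### The symmetry `sg` (conjugation by the reversal) -/

def sg (z : Equiv.Perm (F2 n)) : Equiv.Perm (F2 n) := Fin.revPerm * z * Fin.revPerm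

theorem sg_apply (z : Equiv.Perm (F2 n)) (x : F2 n) : sg z x = (z x.rev).rev := by
  simp [sg, Equiv.Perm.mul_apply]

theorem sg_symm_apply (z : Equiv.Perm (F2 n)) (b : F2 n) :
    (sg z).symm b = (z.symm b.rev).rev := by
  rw [Equiv.symm_apply_eq, sg_apply]
  simp

theorem sg_sg (z : Equiv.Perm (F2 n)) : sg (sg z) = z := by
  apply Equiv.ext
  intro x
  simp [sg_apply]

theorem mem_invSet_sg {z : Equiv.Perm (F2 n)} {a b : F2 n} :
    (a, b) ∈ invSet (sg z) ↔ (b.rev, a.rev) ∈ invSet z := by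
  simp only [invSet, Set.mem_setOf_eq, sg_symm_apply]
  rw [Fin.rev_lt_rev, Fin.rev_lt_rev]

theorem wle_sg {u v : Equiv.Perm (F2 n)} (h : wle u v) : wle (sg u) (sg v) := by
  rintro ⟨a, b⟩ hp
  rw [mem_invSet_sg] at hp ⊢
  exact h hp

theorem sg_lub {x y j : Equiv.Perm (F2 n)} (h : IsLUBr wle x y j) :
    IsLUBr wle (sg x) (sg y) (sg j) := by
  refine ⟨wle_sg h.1, wle_sg h.2.1, fun b h1 h2 => ?_⟩
  have h1' : wle x (sg b) := by have := wle_sg h1; rwa [sg_sg] at this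
  have h2' : wle y (sg b) := by have := wle_sg h2; rwa [sg_sg] at this
  have := wle_sg (h.2.2 (sg b) h1' h2')
  rwa [sg_sg] at this

theorem sg_glb {x y j : Equiv.Perm (F2 n)} (h : IsGLBr wle x y j) :
    IsGLBr wle (sg x) (sg y) (sg j) := by
  refine ⟨wle_sg h.1, wle_sg h.2.1, fun b h1 h2 => ?_⟩
  have h1' : wle (sg b) x := by have := wle_sg h1; rwa [sg_sg] at this
  have h2' : wle (sg b) y := by have := wle_sg h2; rwa [sg_sg] at this
  have := wle_sg (h.2.2 (sg b) h1' h2')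
  rwa [sg_sg] at this

theorem lub_swap {α : Type*} {le : α → α → Prop} {x y m : α} (h : IsLUBr le x y m) :
    IsLUBr le y x m := ⟨h.2.1, h.1, fun b h1 h2 => h.2.2 b h2 h1⟩

theorem glb_swap {α : Type*} {le : α → α → Prop} {x y m : α} (h : IsGLBr le x y m) :
    IsGLBr le y x m := ⟨h.2.1, h.1, fun b h1 h2 => h.2.2 b h2 h1⟩

/-! ### Chosen meets, and the projection onto the symmetric part -/

noncomputable def glbP (u v : Equiv.Perm (F2 n)) : Equiv.Perm (F2 n) :=
  Classical.choose (exists_glb u v)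

theorem glbP_spec (u v : Equiv.Perm (F2 n)) : IsGLBr wle u v (glbP u v) :=
  Classical.choose_spec (exists_glb u v)

/-! ### Congruence machinery -/

theorem inter_congr {α : Type*} {le : α → α → Prop} {r s mm : Setoid α}
    (hm : ∀ x y, mm.r x y ↔ r.r x y ∧ s.r x y)
    (hr : IsCongr le r) (hs : IsCongr le s) : IsCongr le mm := by
  constructor
  · intro x1 x2 y1 y2 m1 m2 hx hy hl1 hl2
    rw [hm] at hx hy ⊢
    exact ⟨hr.1 _ _ _ _ _ _ hx.1 hy.1 hl1 hl2, hs.1 _ _ _ _ _ _ hx.2 hy.2 hl1 hl2⟩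
  · intro x1 x2 y1 y2 m1 m2 hx hy hl1 hl2
    rw [hm] at hx hy ⊢
    exact ⟨hr.2 _ _ _ _ _ _ hx.1 hy.1 hl1 hl2, hs.2 _ _ _ _ _ _ hx.2 hy.2 hl1 hl2⟩

def interSetoid {α : Type*} (r s : Setoid α) : Setoid α :=
  ⟨fun a b => r.r a b ∧ s.r a b,
    ⟨fun a => ⟨r.iseqv.refl a, s.iseqv.refl a⟩,
     fun h => ⟨r.iseqv.symm h.1, s.iseqv.symm h.2⟩,
     fun h h' => ⟨r.iseqv.trans h.1 h'.1, s.iseqv.trans h.2 h'.2⟩⟩⟩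

def sgSetoid (r : Setoid (Equiv.Perm (F2 n))) : Setoid (Equiv.Perm (F2 n)) :=
  ⟨fun a b => r.r a b ∧ r.r (sg a) (sg b),
    ⟨fun a => ⟨r.iseqv.refl a, r.iseqv.refl _⟩,
     fun h => ⟨r.iseqv.symm h.1, r.iseqv.symm h.2⟩,
     fun h h' => ⟨r.iseqv.trans h.1 h'.1, r.iseqv.trans h.2 h'.2⟩⟩⟩

theorem sgSetoid_congr {r : Setoid (Equiv.Perm (F2 n))} (hc : IsCongr wle r) :
    IsCongr wle (sgSetoid r) := by
  constructor
  · rintro x1 x2 y1 y2 m1 m2 ⟨hx, hx'⟩ ⟨hy, hy'⟩ h1 h2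
    exact ⟨hc.1 _ _ _ _ _ _ hx hy h1 h2,
      hc.1 _ _ _ _ _ _ hx' hy' (sg_lub h1) (sg_lub h2)⟩
  · rintro x1 x2 y1 y2 m1 m2 ⟨hx, hx'⟩ ⟨hy, hy'⟩ h1 h2
    exact ⟨hc.2 _ _ _ _ _ _ hx hy h1 h2,
      hc.2 _ _ _ _ _ _ hx' hy' (sg_glb h1) (sg_glb h2)⟩

theorem sgSetoid_stable {r : Setoid (Equiv.Perm (F2 n))} {a b : Equiv.Perm (F2 n)}
    (h : (sgSetoid r).r a b) : (sgSetoid r).r (sg a) (sg b) := by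
  refine ⟨h.2, ?_⟩
  rw [sg_sg, sg_sg]
  exact h.1

theorem sgSetoid_restricts {r' : Setoid (Equiv.Perm (F2 n))} {r : Setoid (BGrp n)}
    (hr : Restricts r' r) : Restricts (sgSetoid r') r := by
  intro x y
  rw [hr x y]
  have hx : sg x.val = x.val := x.2
  have hy : sg y.val = y.val := y.2
  constructor
  · intro h; exact ⟨h, by rw [hx, hy]; exact h⟩
  · intro h; exact h.1

/-! ### The join of two congruences -/

def bor (ra rb : Setoid (Equiv.Perm (F2 n))) (a b : Equiv.Perm (F2 n)) : Prop :=
  ra.r a b ∨ rb.r a b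

theorem bor_symm {ra rb : Setoid (Equiv.Perm (F2 n))} {a b : Equiv.Perm (F2 n)}
    (h : bor ra rb a b) : bor ra rb b a := h.imp ra.iseqv.symm rb.iseqv.symm

def jSetoid (ra rb : Setoid (Equiv.Perm (F2 n))) : Setoid (Equiv.Perm (F2 n)) :=
  ⟨fun a b => TransGen (bor ra rb) a b,
    ⟨fun a => TransGen.single (Or.inl (ra.iseqv.refl a)),
     fun {a b} h => by
       induction h with
       | single h => exact TransGen.single (bor_symm h)
       | tail _ h ih => exact (TransGen.single (bor_symm h)).trans ih,
     fun h h' => h.trans h'⟩⟩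

theorem chain_lub {ra rb : Setoid (Equiv.Perm (F2 n))}
    (hca : IsCongr wle ra) (hcb : IsCongr wle rb) :
    ∀ {x1 x2 : Equiv.Perm (F2 n)}, TransGen (bor ra rb) x1 x2 →
      ∀ y m1 m2, IsLUBr wle x1 y m1 → IsLUBr wle x2 y m2 →
        TransGen (bor ra rb) m1 m2 := by
  have hstep : ∀ x1 x2 y m1 m2 : Equiv.Perm (F2 n), bor ra rb x1 x2 → IsLUBr wle x1 y m1 →
      IsLUBr wle x2 y m2 → bor ra rb m1 m2 := by
    intro x1 x2 y m1 m2 h h1 h2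
    rcases h with h | h
    · exact Or.inl (hca.1 _ _ _ _ _ _ h (ra.iseqv.refl y) h1 h2)
    · exact Or.inr (hcb.1 _ _ _ _ _ _ h (rb.iseqv.refl y) h1 h2)
  intro x1 x2 h
  induction h with
  | single h => exact fun y m1 m2 h1 h2 => TransGen.single (hstep _ _ _ _ _ h h1 h2)
  | @tail b x2 h hb ih =>
    intro y m1 m2 h1 h2
    obtain ⟨c, hc⟩ := exists_lub b y
    exact (ih y m1 c h1 hc).tail (hstep _ _ _ _ _ hb hc h2)

theorem chain_glb {ra rb : Setoid (Equiv.Perm (F2 n))}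
    (hca : IsCongr wle ra) (hcb : IsCongr wle rb) :
    ∀ {x1 x2 : Equiv.Perm (F2 n)}, TransGen (bor ra rb) x1 x2 →
      ∀ y m1 m2, IsGLBr wle x1 y m1 → IsGLBr wle x2 y m2 →
        TransGen (bor ra rb) m1 m2 := by
  have hstep : ∀ x1 x2 y m1 m2 : Equiv.Perm (F2 n), bor ra rb x1 x2 → IsGLBr wle x1 y m1 →
      IsGLBr wle x2 y m2 → bor ra rb m1 m2 := by
    intro x1 x2 y m1 m2 h h1 h2
    rcases h with h | h
    · exact Or.inl (hca.2 _ _ _ _ _ _ h (ra.iseqv.refl y) h1 h2)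
    · exact Or.inr (hcb.2 _ _ _ _ _ _ h (rb.iseqv.refl y) h1 h2)
  intro x1 x2 h
  induction h with
  | single h => exact fun y m1 m2 h1 h2 => TransGen.single (hstep _ _ _ _ _ h h1 h2)
  | @tail b x2 h hb ih =>
    intro y m1 m2 h1 h2
    obtain ⟨c, hc⟩ := exists_glb b y
    exact (ih y m1 c h1 hc).tail (hstep _ _ _ _ _ hb hc h2)

theorem jSetoid_congr {ra rb : Setoid (Equiv.Perm (F2 n))}
    (hca : IsCongr wle ra) (hcb : IsCongr wle rb) : IsCongr wle (jSetoid ra rb) := by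
  constructor
  · intro x1 x2 y1 y2 m1 m2 hx hy h1 h2
    obtain ⟨c, hc⟩ := exists_lub x2 y1
    exact (chain_lub hca hcb hx y1 m1 c h1 hc).trans
      (chain_lub hca hcb hy x2 c m2 (lub_swap hc) (lub_swap h2))
  · intro x1 x2 y1 y2 m1 m2 hx hy h1 h2
    obtain ⟨c, hc⟩ := exists_glb x2 y1
    exact (chain_glb hca hcb hx y1 m1 c h1 hc).trans
      (chain_glb hca hcb hy x2 c m2 (glb_swap hc) (glb_swap h2))

/-! ### `B_n` is a sublattice -/

theorem bsub_lub {x y mb : BGrp n} (h : IsLUBr ble x y mb) :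
    IsLUBr wle x.val y.val mb.val := by
  obtain ⟨j, hj⟩ := exists_lub x.val y.val
  have hxs : sg x.val = x.val := x.2
  have hys : sg y.val = y.val := y.2
  have hjs : Fin.revPerm * j * Fin.revPerm = j := by
    have := sg_lub hj
    rw [hxs, hys] at this
    exact lub_unique this hj
  have hup : wle mb.val j := h.2.2 ⟨j, hjs⟩ hj.1 hj.2.1
  have hdown : wle j mb.val := hj.2.2 mb.val h.1 h.2.1
  have heq : mb.val = j := wle_antisymm hup hdown
  rw [heq]
  exact hj

theorem bsub_glb {x y mb : BGrp n} (h : IsGLBr ble x y mb) :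
    IsGLBr wle x.val y.val mb.val := by
  obtain ⟨j, hj⟩ := exists_glb x.val y.val
  have hxs : sg x.val = x.val := x.2
  have hys : sg y.val = y.val := y.2
  have hjs : Fin.revPerm * j * Fin.revPerm = j := by
    have := sg_glb hj
    rw [hxs, hys] at this
    exact glb_unique this hj
  have hup : wle j mb.val := h.2.2 ⟨j, hjs⟩ hj.1 hj.2.1
  have hdown : wle mb.val j := hj.2.2 mb.val h.1 h.2.1
  have heq : mb.val = j := wle_antisymm hdown hup
  rw [heq]
  exact hj

def resSetoid (r' : Setoid (Equiv.Perm (F2 n))) : Setoid (BGrp n) :=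
  ⟨fun x y => r'.r x.val y.val,
   ⟨fun x => r'.iseqv.refl _, fun h => r'.iseqv.symm h, fun h h' => r'.iseqv.trans h h'⟩⟩

theorem resSetoid_congr {r' : Setoid (Equiv.Perm (F2 n))} (h : IsCongr wle r') :
    IsCongr ble (resSetoid r') := by
  constructor
  · intro x1 x2 y1 y2 m1 m2 hx hy h1 h2
    exact h.1 _ _ _ _ _ _ hx hy (bsub_lub h1) (bsub_lub h2)
  · intro x1 x2 y1 y2 m1 m2 hx hy h1 h2
    exact h.2 _ _ _ _ _ _ hx hy (bsub_glb h1) (bsub_glb h2)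

/-! ### The projection to `B_n` -/

noncomputable def proj (z : Equiv.Perm (F2 n)) : BGrp n :=
  ⟨glbP z (sg z), by
    have h1 := sg_glb (glbP_spec z (sg z))
    rw [sg_sg] at h1
    exact glb_unique (glb_swap h1) (glbP_spec z (sg z))⟩

theorem proj_eq_self (x : BGrp n) : proj x.val = x := by
  apply Subtype.ext
  have hx : sg x.val = x.val := x.2
  have h1 := glbP_spec x.val (sg x.val)
  rw [hx] at h1
  have h2 : IsGLBr wle x.val x.val x.val := ⟨wle_refl _, wle_refl _, fun b hb _ => hb⟩
  show glbP x.val (sg x.val) = x.val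
  rw [hx]
  exact glb_unique h1 h2

theorem proj_chain {ra rb : Setoid (Equiv.Perm (F2 n))} {r1 r2 s : Setoid (BGrp n)}
    (hca : IsCongr wle ra) (hcb : IsCongr wle rb)
    (hsta : ∀ a b : Equiv.Perm (F2 n), ra.r a b → ra.r (sg a) (sg b))
    (hstb : ∀ a b : Equiv.Perm (F2 n), rb.r a b → rb.r (sg a) (sg b))
    (hres1 : Restricts ra r1) (hres2 : Restricts rb r2)
    (hs1 : setle r1 s) (hs2 : setle r2 s)
    {a b : Equiv.Perm (F2 n)} (h : TransGen (bor ra rb) a b) :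
    s.r (proj a) (proj b) := by
  have hstep : ∀ a b : Equiv.Perm (F2 n), bor ra rb a b → s.r (proj a) (proj b) := by
    intro a b h
    rcases h with h | h
    · have h' := hca.2 a b (sg a) (sg b) _ _ h (hsta a b h)
        (glbP_spec a (sg a)) (glbP_spec b (sg b))
      exact hs1 _ _ ((hres1 (proj a) (proj b)).2 h')
    · have h' := hcb.2 a b (sg a) (sg b) _ _ h (hstb a b h)
        (glbP_spec a (sg a)) (glbP_spec b (sg b))
      exact hs2 _ _ ((hres2 (proj a) (proj b)).2 h')
  induction h with
  | single h => exact hstep _ _ h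
  | tail _ h ih => exact s.iseqv.trans ih (hstep _ _ h)

end SB

/-- `Con_A(B_n)` is closed under meet (intersection of relations) and join in the
congruence lattice of the weak order on `B_n`; that is, it induces a sublattice of
`Con(B_n)`. -/
theorem stmt18 (n : ℕ) (r1 r2 : Setoid (BGrp n))
    (h1 : IsCongr ble r1) (h2 : IsCongr ble r2) (hA1 : ConA r1) (hA2 : ConA r2) :
    (∀ m : Setoid (BGrp n), (∀ x y, m.r x y ↔ (r1.r x y ∧ r2.r x y)) →
        IsCongr ble m ∧ ConA m) ∧
    (∀ s : Setoid (BGrp n), IsCongr ble s → setle r1 s → setle r2 s →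
        (∀ t : Setoid (BGrp n), IsCongr ble t → setle r1 t → setle r2 t → setle s t) →
        ConA s) := by
  obtain ⟨r1o, hc1o, hr1o⟩ := hA1
  obtain ⟨r2o, hc2o, hr2o⟩ := hA2
  constructor
  · -- meets
    intro m hm
    refine ⟨SB.inter_congr hm h1 h2, ⟨SB.interSetoid r1o r2o, ?_, ?_⟩⟩
    · exact SB.inter_congr (fun x y => Iff.rfl) hc1o hc2o
    · intro x y
      rw [hm x y, hr1o x y, hr2o x y]
      exact Iff.rfl
  · -- joins
    intro s hcs hs1 hs2 hmin
    set ra := SB.sgSetoid r1o with hra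
    set rb := SB.sgSetoid r2o with hrb
    have hca : IsCongr wle ra := SB.sgSetoid_congr hc1o
    have hcb : IsCongr wle rb := SB.sgSetoid_congr hc2o
    have hres1 : Restricts ra r1 := SB.sgSetoid_restricts hr1o
    have hres2 : Restricts rb r2 := SB.sgSetoid_restricts hr2o
    refine ⟨SB.jSetoid ra rb, SB.jSetoid_congr hca hcb, ?_⟩
    intro x y
    constructor
    · -- s.r x y → chain
      intro hxy
      have ht : IsCongr ble (SB.resSetoid (SB.jSetoid ra rb)) :=
        SB.resSetoid_congr (SB.jSetoid_congr hca hcb)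
      have hta : setle r1 (SB.resSetoid (SB.jSetoid ra rb)) := by
        intro a b hab
        exact Relation.TransGen.single (Or.inl ((hres1 a b).1 hab))
      have htb : setle r2 (SB.resSetoid (SB.jSetoid ra rb)) := by
        intro a b hab
        exact Relation.TransGen.single (Or.inr ((hres2 a b).1 hab))
      exact hmin _ ht hta htb x y hxy
    · -- chain → s.r x y
      intro hxy
      have h := SB.proj_chain hca hcb (fun a b => SB.sgSetoid_stable)
        (fun a b => SB.sgSetoid_stable) hres1 hres2 hs1 hs2 hxy
      rwa [SB.proj_eq_self x, SB.proj_eq_self y] at h
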